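/- If R is a weakly strongly 2-nil-clean ring in which 3 is nilpotent, then R is strongly 2-nil-clean, i.e., every element of R is a sum of two idempotents and a nilpotent which commute with each other. -/

import Mathlib

/-- A ring is weakly strongly 2-nil-clean if every element is `±e ± f + n` with
`e, f` idempotents and `n` nilpotent, all commuting with each other. -/
def IsWeaklyStrongly2NilClean (R : Type*) [Ring R] : Prop :=
  ∀ a : R, ∃ e f n : R, IsIdempotentElem e ∧ IsIdempotentElem f ∧ IsNilpotent n ∧
    Commute e f ∧ Commute e n ∧ Commute f n ∧
    (a = e + f + n ∨ a = e - f + n ∨ a = -e + f + n ∨ a = -e - f + n)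

/-- A ring is strongly 2-nil-clean if every element is `e + f + n` with
`e, f` idempotents and `n` nilpotent, all commuting with each other. -/
def IsStrongly2NilClean (R : Type*) [Ring R] : Prop :=
  ∀ a : R, ∃ e f n : R, IsIdempotentElem e ∧ IsIdempotentElem f ∧ IsNilpotent n ∧
    Commute e f ∧ Commute e n ∧ Commute f n ∧ a = e + f + n

section
variable {R : Type*} [Ring R]

lemma three_mul_nilpotent' (h3 : IsNilpotent (3 : R)) (x : R) : IsNilpotent (3 * x) :=
  (Commute.ofNat_left 3 x).isNilpotent_mul_right h3

lemma key' (h3 : IsNilpotent (3 : R)) {u v m : R}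
    (hu : IsIdempotentElem u) (hv : IsIdempotentElem v)
    (huv : u * v = 0) (hvu : v * u = 0)
    (hm : IsNilpotent m) (hum : Commute u m) (hvm : Commute v m) :
    ∃ e f n : R, IsIdempotentElem e ∧ IsIdempotentElem f ∧ IsNilpotent n ∧
      Commute e f ∧ Commute e n ∧ Commute f n ∧ v - u + m = e + f + n := by
  have hvu' : Commute v u := by unfold Commute SemiconjBy; rw [huv, hvu]
  have hu3 : Commute u (3 * u) := (Commute.ofNat_right u 3).mul_right (Commute.refl u)
  have hv3 : Commute v (3 * u) := (Commute.ofNat_right v 3).mul_right hvu'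
  have hm3 : Commute m (3 * u) := (Commute.ofNat_right m 3).mul_right hum.symm
  refine ⟨u + v, u, m - 3 * u, ?_, hu,
    hm3.isNilpotent_sub hm (three_mul_nilpotent' h3 u),
    (Commute.refl u).add_left hvu',
    (hum.add_left hvm).sub_right (hu3.add_left hv3),
    hum.sub_right hu3, by noncomm_ring⟩
  show (u + v) * (u + v) = u + v
  rw [add_mul, mul_add, mul_add, hu.eq, hv.eq, huv, hvu]; abel

end

theorem strongly2NilClean_of_wsnc_three_nilpotent {R : Type*} [Ring R]
    (hR : IsWeaklyStrongly2NilClean R) (h3 : IsNilpotent (3 : R)) :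
    IsStrongly2NilClean R := by
  intro a
  obtain ⟨e, f, n, he, hf, hn, hef, hen, hfn, hcase⟩ := hR a
  have hef' : e * f = f * e := hef
  have he' : ∀ x : R, e * (e * x) = e * x := fun x => by rw [← mul_assoc, he.eq]
  have hf' : ∀ x : R, f * (f * x) = f * x := fun x => by rw [← mul_assoc, hf.eq]
  have hfe' : ∀ x : R, f * (e * x) = e * (f * x) := fun x => by
    rw [← mul_assoc, ← hef', mul_assoc]
  have hefn : Commute (e * f) n := hen.mul_left hfn
  rcases hcase with h | h | h | h
  · exact ⟨e, f, n, he, hf, hn, hef, hen, hfn, h⟩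
  · -- a = e - f + n ; v = e - e*f, u = f - e*f
    obtain ⟨e', f', n', h1, h2, h3', h4, h5, h6, h7⟩ :=
      key' h3 (u := f - e * f) (v := e - e * f) (m := n)
      (by show _ = _; simp only [mul_sub, sub_mul, mul_assoc, he.eq, hf.eq, he', hf', hfe',
            ← hef']; abel)
      (by show _ = _; simp only [mul_sub, sub_mul, mul_assoc, he.eq, hf.eq, he', hf', hfe',
            ← hef']; abel)
      (by simp only [mul_sub, sub_mul, mul_assoc, he.eq, hf.eq, he', hf', hfe', ← hef']; abel)
      (by simp only [mul_sub, sub_mul, mul_assoc, he.eq, hf.eq, he', hf', hfe', ← hef']; abel)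
      hn (hfn.sub_left hefn) (hen.sub_left hefn)
    exact ⟨e', f', n', h1, h2, h3', h4, h5, h6, by rw [h, ← h7]; noncomm_ring⟩
  · -- a = -e + f + n ; v = f - e*f, u = e - e*f
    obtain ⟨e', f', n', h1, h2, h3', h4, h5, h6, h7⟩ :=
      key' h3 (u := e - e * f) (v := f - e * f) (m := n)
      (by show _ = _; simp only [mul_sub, sub_mul, mul_assoc, he.eq, hf.eq, he', hf', hfe',
            ← hef']; abel)
      (by show _ = _; simp only [mul_sub, sub_mul, mul_assoc, he.eq, hf.eq, he', hf', hfe',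
            ← hef']; abel)
      (by simp only [mul_sub, sub_mul, mul_assoc, he.eq, hf.eq, he', hf', hfe', ← hef']; abel)
      (by simp only [mul_sub, sub_mul, mul_assoc, he.eq, hf.eq, he', hf', hfe', ← hef']; abel)
      hn (hen.sub_left hefn) (hfn.sub_left hefn)
    exact ⟨e', f', n', h1, h2, h3', h4, h5, h6, by rw [h, ← h7]; noncomm_ring⟩
  · -- a = -e - f + n ; v = e*f, u = e + f - 2*(e*f), m = n - 3*(e*f)
    have hce : Commute e (e * f) := (Commute.refl e).mul_right hef
    have hcf : Commute f (e * f) := hef.symm.mul_right (Commute.refl f)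
    have hcu : Commute (e + f - 2 * (e * f)) (e * f) :=
      (hce.add_left hcf).sub_left ((Commute.ofNat_left 2 (e * f)).mul_left (Commute.refl _))
    have hun : Commute (e + f - 2 * (e * f)) n :=
      (hen.add_left hfn).sub_left ((Commute.ofNat_left 2 n).mul_left hefn)
    have hm3 : Commute n (3 * (e * f)) := (Commute.ofNat_right n 3).mul_right hefn.symm
    have hmnil : IsNilpotent (n - 3 * (e * f)) :=
      hm3.isNilpotent_sub hn (three_mul_nilpotent' h3 (e * f))
    obtain ⟨e', f', n', h1, h2, h3', h4, h5, h6, h7⟩ :=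
      key' h3 (u := e + f - 2 * (e * f)) (v := e * f) (m := n - 3 * (e * f))
      (by show _ = _; simp only [two_mul, mul_sub, sub_mul, mul_add, add_mul, mul_assoc,
            he.eq, hf.eq, he', hf', hfe', ← hef']; abel)
      (by show _ = _; simp only [mul_assoc, he.eq, hf.eq, he', hf', hfe', ← hef'])
      (by simp only [two_mul, mul_sub, sub_mul, mul_add, add_mul, mul_assoc,
            he.eq, hf.eq, he', hf', hfe', ← hef']; abel)
      (by simp only [two_mul, mul_sub, sub_mul, mul_add, add_mul, mul_assoc,
            he.eq, hf.eq, he', hf', hfe', ← hef']; abel)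
      hmnil
      (hun.sub_right ((Commute.ofNat_right _ 3).mul_right hcu))
      (hefn.sub_right ((Commute.ofNat_right _ 3).mul_right (Commute.refl _)))
    exact ⟨e', f', n', h1, h2, h3', h4, h5, h6, by rw [h, ← h7]; noncomm_ring⟩
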